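/- Let ℓ be a positive integer and let φ ∈ S(ℝⁿ) satisfy condition (1.10). For integers j < k, define m̃_{k,j}(ξ) := φ̂(ξ) A_ℓ(2^{j-k}|ξ|) for ξ ∈ ℝⁿ. Then m̃_{k,j} is supported in {ξ : 1/2 ≤ |ξ| ≤ 2}, and for every multi-index β there exists a constant C, depending only on β, φ, n and ℓ (not on j, k), such that |∂^β m̃_{k,j}(ξ)| ≤ C 2^{2ℓ(j-k)} for all ξ ∈ ℝⁿ. -/

import Mathlib

open MeasureTheory Metric Finset
open scoped ENNReal SchwartzMap ContDiff FourierTransform RealInnerProductSpace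

/-- The Fourier transform `f̂(ξ) = ∫ f(x) e^{-i x·ξ} dx`. -/
noncomputable def FT {n : ℕ} (f : EuclideanSpace ℝ (Fin n) → ℂ)
    (ξ : EuclideanSpace ℝ (Fin n)) : ℂ :=
  ∫ x, Complex.exp (-(Complex.I * ((inner ℝ x ξ : ℝ) : ℂ))) * f x

/-- Condition (1.10): `supp φ̂ ⊆ {1/2 ≤ |ξ| ≤ 2}` and `|φ̂| ≥ c > 0` on `{3/5 ≤ |ξ| ≤ 5/3}`. -/
def Cond110 {n : ℕ} (φ : 𝓢(EuclideanSpace ℝ (Fin n), ℂ)) : Prop :=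
  (Function.support (FT ⇑φ) ⊆ {ξ : EuclideanSpace ℝ (Fin n) | 1/2 ≤ ‖ξ‖ ∧ ‖ξ‖ ≤ 2}) ∧
    ∃ c : ℝ, 0 < c ∧ ∀ ξ : EuclideanSpace ℝ (Fin n), 3/5 ≤ ‖ξ‖ → ‖ξ‖ ≤ 5/3 → c ≤ ‖FT ⇑φ ξ‖

/-- `A_ℓ(s) := γ_n (4^ℓ/C(2ℓ,ℓ)) ∫_0^1 (1-u²)^{(n-1)/2} (sin(us/2))^{2ℓ} du`. -/
noncomputable def AFn (n ℓ : ℕ) (s : ℝ) : ℝ :=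
  (∫ u in (0:ℝ)..1, (1 - u ^ 2) ^ (((n : ℝ) - 1) / 2))⁻¹ * ((4 : ℝ) ^ ℓ / ((2 * ℓ).choose ℓ : ℝ)) *
    ∫ u in (0:ℝ)..1, (1 - u ^ 2) ^ (((n : ℝ) - 1) / 2) * Real.sin (u * s / 2) ^ (2 * ℓ)

/-- The partial derivative in the `i`-th coordinate direction. -/
noncomputable def pderivI {n : ℕ} (i : Fin n) (f : EuclideanSpace ℝ (Fin n) → ℂ) :
    EuclideanSpace ℝ (Fin n) → ℂ :=
  fun x => fderiv ℝ f x (EuclideanSpace.single i 1)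

/-- The multi-index partial derivative `∂^β`. -/
noncomputable def pderivMulti {n : ℕ} (β : Fin n → ℕ)
    (f : EuclideanSpace ℝ (Fin n) → ℂ) : EuclideanSpace ℝ (Fin n) → ℂ :=
  (List.finRange n).foldr (fun i g => (pderivI i)^[β i] g) f

/-- `m̃_{k,j}(ξ) := φ̂(ξ) A_ℓ(2^{j-k}|ξ|)`. -/
noncomputable def mTilde {n : ℕ} (ℓ : ℕ) (φ : 𝓢(EuclideanSpace ℝ (Fin n), ℂ)) (k j : ℤ)
    (ξ : EuclideanSpace ℝ (Fin n)) : ℂ :=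
  FT ⇑φ ξ * ((AFn n ℓ ((2 : ℝ) ^ (j - k) * ‖ξ‖) : ℝ) : ℂ)


section Aux
open Complex in
lemma D_zero : ∀ N : ℕ, ∀ p : ℕ, p < N →
    ∑ m ∈ Finset.range (N+1), ((-1:ℝ)^m * (N.choose m : ℝ) * (m:ℝ)^p) = 0 := by
  intro N
  induction N using Nat.strong_induction_on with
  | _ N ih =>
    intro p hp
    match p with
    | 0 =>
      have h := Int.alternating_sum_range_choose_of_ne (n := N) (by omega)
      have : ((∑ i ∈ range (N + 1), (-1:ℤ) ^ i * ↑(N.choose i) : ℤ) : ℝ) = 0 := by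
        rw [h]; norm_num
      push_cast at this
      simpa using this
    | p + 1 =>
      obtain ⟨M, rfl⟩ : ∃ M, N = M + 1 := ⟨N - 1, by omega⟩
      have hpM : p < M := by omega
      rw [Finset.sum_range_succ']
      have hkey : ∀ i : ℕ, (((M+1).choose (i+1) : ℝ)) * ((i:ℝ)+1) = ((M:ℝ)+1) * (M.choose i : ℝ) := by
        intro i
        have : ((M+1).choose (i+1)) * (i+1) = (M+1) * (M.choose i) :=
          (Nat.add_one_mul_choose_eq M i).symm
        exact_mod_cast congrArg (Nat.cast : ℕ → ℝ) this
      have hterm : ∀ i : ℕ,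
          (-1:ℝ)^(i+1) * ((M+1).choose (i+1) : ℝ) * ((i:ℝ)+1)^(p+1)
            = ∑ q ∈ range (p+1), (-((M:ℝ)+1) * (p.choose q : ℝ)) *
                ((-1:ℝ)^i * (M.choose i : ℝ) * (i:ℝ)^q) := by
        intro i
        have hexp : ((i:ℝ)+1)^p = ∑ q ∈ range (p+1), (i:ℝ)^q * (p.choose q : ℝ) := by
          have := add_pow (i:ℝ) 1 p
          simpa using this
        calc (-1:ℝ)^(i+1) * ((M+1).choose (i+1) : ℝ) * ((i:ℝ)+1)^(p+1)
            = (-1)^(i+1) * (((M+1).choose (i+1) : ℝ) * ((i:ℝ)+1)) * ((i:ℝ)+1)^p := by ring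
          _ = (-1)^(i+1) * (((M:ℝ)+1) * (M.choose i : ℝ)) * ((i:ℝ)+1)^p := by rw [hkey]
          _ = ∑ q ∈ range (p+1), (-((M:ℝ)+1) * (p.choose q : ℝ)) *
                ((-1:ℝ)^i * (M.choose i : ℝ) * (i:ℝ)^q) := by
              rw [hexp, Finset.mul_sum]
              refine Finset.sum_congr rfl fun q _ => ?_
              ring
      have hcast : ∀ i:ℕ, ((i:ℝ)+1) = ((i+1 : ℕ):ℝ) := by intro i; push_cast; ring
      calc (∑ i ∈ range (M+1), (-1:ℝ)^(i+1) * ((M+1).choose (i+1):ℝ) * ((i+1:ℕ):ℝ)^(p+1))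
            + (-1:ℝ)^0 * ((M+1).choose 0 : ℝ) * ((0:ℕ):ℝ)^(p+1)
          = ∑ i ∈ range (M+1), ∑ q ∈ range (p+1), (-((M:ℝ)+1) * (p.choose q : ℝ)) *
                ((-1:ℝ)^i * (M.choose i : ℝ) * (i:ℝ)^q) := by
            rw [Finset.sum_congr rfl (fun i _ => by rw [← hcast i, hterm i])]
            simp
        _ = ∑ q ∈ range (p+1), (-((M:ℝ)+1) * (p.choose q : ℝ)) *
              ∑ i ∈ range (M+1), ((-1:ℝ)^i * (M.choose i : ℝ) * (i:ℝ)^q) := by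
            rw [Finset.sum_comm]
            refine Finset.sum_congr rfl fun q _ => ?_
            rw [Finset.mul_sum]
        _ = 0 := by
            refine Finset.sum_eq_zero fun q hq => ?_
            rw [ih M (by omega) q (by simp at hq; omega)]
            ring

open Complex in
lemma sin_pow_eq_cos_sum (ℓ : ℕ) (x : ℝ) :
    (-4:ℝ)^ℓ * Real.sin x ^ (2*ℓ) =
    ∑ m ∈ Finset.range (2*ℓ+1),
      ((2*ℓ).choose m : ℝ) * (-1)^m * Real.cos ((2*(m:ℝ) - 2*(ℓ:ℝ)) * x) := by
  have hsin : (2:ℂ) * I * Complex.sin x = Complex.exp ((x:ℂ)*I) - Complex.exp (-(x:ℂ)*I) := by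
    rw [Complex.sin]
    linear_combination (Complex.exp (-(x:ℂ)*I) - Complex.exp ((x:ℂ)*I)) * Complex.I_sq
  have hC : ((-4:ℂ))^ℓ * (Complex.sin x)^(2*ℓ)
      = ∑ m ∈ Finset.range (2*ℓ+1),
        (((2*ℓ).choose m : ℂ)) * (-1)^m * Complex.exp ((((2*(m:ℝ) - 2*(ℓ:ℝ)) * x : ℝ)) * I) := by
    have h1 : ((-4:ℂ))^ℓ * (Complex.sin x)^(2*ℓ) = ((2:ℂ) * I * Complex.sin x)^(2*ℓ) := by
      have h4 : ((2:ℂ)*I)^(2*ℓ) = (-4)^ℓ := by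
        rw [pow_mul, show ((2:ℂ)*I)^2 = -4 by rw [mul_pow, Complex.I_sq]; norm_num]
      rw [mul_pow ((2:ℂ)*I) _, h4]
    rw [h1, hsin, sub_eq_add_neg, add_pow]
    refine Finset.sum_congr rfl fun m hm => ?_
    have hm' : m ≤ 2*ℓ := by simp at hm; omega
    have hneg : (-Complex.exp (-(x:ℂ)*I))^(2*ℓ-m)
        = (-1)^m * Complex.exp (((2*ℓ-m : ℕ):ℂ)*(-(x:ℂ)*I)) := by
      rw [neg_pow, ← Complex.exp_nat_mul]
      congr 1
      have h1 : (-1:ℂ)^(2*ℓ-m) * (-1:ℂ)^m = 1 := by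
        rw [← pow_add]
        have h3 : 2*ℓ - m + m = 2*ℓ := by omega
        rw [h3]
        exact Even.neg_one_pow (even_two_mul ℓ)
      have h2 : (-1:ℂ)^m * (-1:ℂ)^m = 1 := by
        rw [← pow_add]; exact Even.neg_one_pow ⟨m, rfl⟩
      linear_combination ((-1:ℂ)^m) * h1 - ((-1:ℂ)^(2*ℓ-m)) * h2
    have hexpm : Complex.exp ((x:ℂ)*I) ^ m = Complex.exp ((m:ℂ)*((x:ℂ)*I)) :=
      (Complex.exp_nat_mul _ m).symm
    rw [hneg, hexpm]
    calc Complex.exp ((m:ℂ)*((x:ℂ)*I)) * ((-1)^m * Complex.exp (((2*ℓ-m : ℕ):ℂ)*(-(x:ℂ)*I)))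
          * ((2*ℓ).choose m : ℂ)
        = ((2*ℓ).choose m : ℂ) * (-1)^m *
            (Complex.exp ((m:ℂ)*((x:ℂ)*I)) * Complex.exp (((2*ℓ-m : ℕ):ℂ)*(-(x:ℂ)*I))) := by
          ring
      _ = ((2*ℓ).choose m : ℂ) * (-1)^m *
            Complex.exp ((((2*(m:ℝ) - 2*(ℓ:ℝ)) * x : ℝ)) * I) := by
          rw [← Complex.exp_add]
          congr 1
          rw [Nat.cast_sub hm']
          push_cast
          ring
  have hL : (((((-4:ℝ))^ℓ * Real.sin x ^ (2*ℓ) : ℝ)) : ℂ)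
      = ((-4:ℂ))^ℓ * (Complex.sin x)^(2*ℓ) := by
    push_cast [Complex.ofReal_sin]
    ring
  have h2 := congrArg Complex.re hC
  rw [← hL, Complex.ofReal_re] at h2
  rw [h2, Complex.re_sum]
  refine Finset.sum_congr rfl fun m hm => ?_
  have h3 : ((2*ℓ).choose m : ℂ) * (-1)^m
      = ((((2*ℓ).choose m : ℝ) * (-1:ℝ)^m : ℝ) : ℂ) := by push_cast; ring
  rw [h3, Complex.re_ofReal_mul, Complex.exp_ofReal_mul_I_re]

noncomputable def cSER (ℓ : ℕ) (k : ℕ) : ℝ :=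
  ((-4:ℝ)^ℓ)⁻¹ *
    (∑ m ∈ Finset.range (2*ℓ+1), ((2*ℓ).choose m : ℝ) * (-1)^m * ((m:ℝ) - (ℓ:ℝ))^(2*k)) *
    ((-1)^k / ((2*k).factorial : ℝ))

lemma abs_sub_le' (ℓ m : ℕ) (hm : m ≤ 2*ℓ) : |(m:ℝ) - (ℓ:ℝ)| ≤ (ℓ:ℝ) := by
  rw [abs_le]
  constructor <;> [skip; skip] <;>
  · have h1 : (m:ℝ) ≤ 2*ℓ := by exact_mod_cast hm
    have h2 : (0:ℝ) ≤ m := Nat.cast_nonneg m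
    linarith

lemma cSER_bound (ℓ k : ℕ) : |cSER ℓ k| ≤ (ℓ:ℝ)^(2*k) / ((2*k).factorial : ℝ) := by
  unfold cSER
  rw [abs_mul, abs_mul]
  have h1 : |((-4:ℝ)^ℓ)⁻¹| = ((4:ℝ)^ℓ)⁻¹ := by
    rw [abs_inv, abs_pow, abs_neg, abs_of_nonneg (by norm_num : (0:ℝ) ≤ 4)]
  have h2 : |((-1:ℝ))^k / ((2*k).factorial : ℝ)| = 1 / ((2*k).factorial : ℝ) := by
    rw [abs_div, abs_pow, abs_neg, abs_one, one_pow, abs_of_nonneg]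
    positivity
  rw [h1, h2]
  have h3 : |∑ m ∈ Finset.range (2*ℓ+1), ((2*ℓ).choose m : ℝ) * (-1)^m * ((m:ℝ) - (ℓ:ℝ))^(2*k)|
      ≤ (4:ℝ)^ℓ * (ℓ:ℝ)^(2*k) := by
    calc |∑ m ∈ Finset.range (2*ℓ+1), ((2*ℓ).choose m : ℝ) * (-1)^m * ((m:ℝ) - (ℓ:ℝ))^(2*k)|
        ≤ ∑ m ∈ Finset.range (2*ℓ+1), |((2*ℓ).choose m : ℝ) * (-1)^m * ((m:ℝ) - (ℓ:ℝ))^(2*k)| :=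
          Finset.abs_sum_le_sum_abs _ _
      _ ≤ ∑ m ∈ Finset.range (2*ℓ+1), ((2*ℓ).choose m : ℝ) * (ℓ:ℝ)^(2*k) := by
          refine Finset.sum_le_sum fun m hm => ?_
          rw [abs_mul, abs_mul, abs_pow, abs_neg, abs_one, one_pow, mul_one,
            Nat.abs_cast, abs_pow]
          have h5 := abs_sub_le' ℓ m (by simp at hm; omega)
          have h6 : |(m:ℝ) - (ℓ:ℝ)|^(2*k) ≤ (ℓ:ℝ)^(2*k) :=
            pow_le_pow_left₀ (abs_nonneg _) h5 _
          gcongr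
      _ = (∑ m ∈ Finset.range (2*ℓ+1), ((2*ℓ).choose m : ℝ)) * (ℓ:ℝ)^(2*k) := by
          rw [Finset.sum_mul]
      _ = (4:ℝ)^ℓ * (ℓ:ℝ)^(2*k) := by
          have : (∑ m ∈ Finset.range (2*ℓ+1), ((2*ℓ).choose m : ℝ)) = (4:ℝ)^ℓ := by
            have h7 := Nat.sum_range_choose (2*ℓ)
            have h4 : ((∑ m ∈ Finset.range (2*ℓ+1), (2*ℓ).choose m : ℕ) : ℝ)
                = ((2^(2*ℓ) : ℕ) : ℝ) := by rw [h7]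
            push_cast at h4
            rw [h4, pow_mul]
            norm_num
          rw [this]
  calc ((4:ℝ)^ℓ)⁻¹ * |∑ m ∈ Finset.range (2*ℓ+1), ((2*ℓ).choose m:ℝ) * (-1)^m * ((m:ℝ)-(ℓ:ℝ))^(2*k)|
        * (1 / ((2*k).factorial : ℝ))
      ≤ ((4:ℝ)^ℓ)⁻¹ * ((4:ℝ)^ℓ * (ℓ:ℝ)^(2*k)) * (1 / ((2*k).factorial : ℝ)) := by
        gcongr <;> positivity
    _ = (ℓ:ℝ)^(2*k) / ((2*k).factorial : ℝ) := by
        field_simp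

lemma cSER_zero (ℓ k : ℕ) (h : k < ℓ) : cSER ℓ k = 0 := by
  unfold cSER
  have hz : (∑ m ∈ Finset.range (2*ℓ+1), ((2*ℓ).choose m : ℝ) * (-1)^m * ((m:ℝ) - (ℓ:ℝ))^(2*k))
      = 0 := by
    calc ∑ m ∈ Finset.range (2*ℓ+1), ((2*ℓ).choose m : ℝ) * (-1)^m * ((m:ℝ) - (ℓ:ℝ))^(2*k)
        = ∑ m ∈ Finset.range (2*ℓ+1), ∑ q ∈ Finset.range (2*k+1),
            ((-(ℓ:ℝ))^(2*k-q) * ((2*k).choose q : ℝ)) *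
              ((-1:ℝ)^m * ((2*ℓ).choose m : ℝ) * (m:ℝ)^q) := by
          refine Finset.sum_congr rfl fun m _ => ?_
          rw [sub_eq_add_neg, add_pow, Finset.mul_sum]
          refine Finset.sum_congr rfl fun q _ => ?_
          ring
      _ = ∑ q ∈ Finset.range (2*k+1), ((-(ℓ:ℝ))^(2*k-q) * ((2*k).choose q : ℝ)) *
            ∑ m ∈ Finset.range (2*ℓ+1), ((-1:ℝ)^m * ((2*ℓ).choose m : ℝ) * (m:ℝ)^q) := by
          rw [Finset.sum_comm]
          exact Finset.sum_congr rfl fun q _ => (Finset.mul_sum _ _ _).symm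
      _ = 0 := by
          refine Finset.sum_eq_zero fun q hq => ?_
          rw [D_zero (2*ℓ) q (by simp at hq; omega)]
          ring
  rw [hz]
  ring

lemma hasSum_sin_pow (ℓ : ℕ) (x : ℝ) :
    HasSum (fun k => cSER ℓ k * x^(2*k)) (Real.sin (x/2) ^ (2*ℓ)) := by
  have hm : ∀ m ∈ Finset.range (2*ℓ+1),
      HasSum (fun k : ℕ => (((-4:ℝ)^ℓ)⁻¹ * (((2*ℓ).choose m : ℝ) * (-1)^m)) *
          ((-1)^k * (((m:ℝ) - (ℓ:ℝ)) * x)^(2*k) / ((2*k).factorial : ℝ)))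
        ((((-4:ℝ)^ℓ)⁻¹ * (((2*ℓ).choose m : ℝ) * (-1)^m)) * Real.cos (((m:ℝ) - (ℓ:ℝ)) * x)) :=
    fun m _ => (Real.hasSum_cos _).mul_left _
  have hsum := hasSum_sum hm
  have hfun : (fun k : ℕ => ∑ m ∈ Finset.range (2*ℓ+1),
        (((-4:ℝ)^ℓ)⁻¹ * (((2*ℓ).choose m : ℝ) * (-1)^m)) *
          ((-1)^k * (((m:ℝ) - (ℓ:ℝ)) * x)^(2*k) / ((2*k).factorial : ℝ)))
      = fun k => cSER ℓ k * x^(2*k) := by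
    funext k
    unfold cSER
    rw [Finset.mul_sum, Finset.sum_mul, Finset.sum_mul]
    refine Finset.sum_congr rfl fun m _ => ?_
    rw [mul_pow]
    ring
  have hval : (∑ m ∈ Finset.range (2*ℓ+1),
        (((-4:ℝ)^ℓ)⁻¹ * (((2*ℓ).choose m : ℝ) * (-1)^m)) * Real.cos (((m:ℝ) - (ℓ:ℝ)) * x))
      = Real.sin (x/2) ^ (2*ℓ) := by
    have hid := sin_pow_eq_cos_sum ℓ (x/2)
    have h4 : ((-4:ℝ)^ℓ) ≠ 0 := by positivity
    have : ∀ m : ℕ, Real.cos ((2*(m:ℝ) - 2*(ℓ:ℝ)) * (x/2)) = Real.cos (((m:ℝ) - (ℓ:ℝ)) * x) := by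
      intro m; congr 1; ring
    calc ∑ m ∈ Finset.range (2*ℓ+1),
          (((-4:ℝ)^ℓ)⁻¹ * (((2*ℓ).choose m : ℝ) * (-1)^m)) * Real.cos (((m:ℝ) - (ℓ:ℝ)) * x)
        = ((-4:ℝ)^ℓ)⁻¹ * ∑ m ∈ Finset.range (2*ℓ+1),
            ((2*ℓ).choose m : ℝ) * (-1)^m * Real.cos ((2*(m:ℝ) - 2*(ℓ:ℝ)) * (x/2)) := by
          rw [Finset.mul_sum]
          refine Finset.sum_congr rfl fun m _ => ?_
          rw [this m]
          ring
      _ = ((-4:ℝ)^ℓ)⁻¹ * ((-4:ℝ)^ℓ * Real.sin (x/2) ^ (2*ℓ)) := by rw [← hid]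
      _ = Real.sin (x/2) ^ (2*ℓ) := by
          field_simp
  rw [hfun] at hsum
  rw [hval] at hsum
  exact hsum

lemma summable_aux (b : ℝ) : Summable (fun k : ℕ => b^(2*k) / ((2*k).factorial : ℝ)) := by
  refine Summable.of_norm_bounded (Real.summable_pow_div_factorial (b^2)) fun k => ?_
  have h1 : ‖b^(2*k) / ((2*k).factorial : ℝ)‖ = |b|^(2*k) / ((2*k).factorial : ℝ) := by
    rw [norm_div, Real.norm_eq_abs, Real.norm_eq_abs, abs_pow,
      abs_of_nonneg (by positivity : (0:ℝ) ≤ ((2*k).factorial : ℝ))]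
  rw [h1]
  have h2 : |b|^(2*k) = (b^2)^k := by rw [pow_mul, sq_abs]
  rw [h2]
  have h3 : ((k.factorial:ℕ):ℝ) ≤ (((2*k).factorial:ℕ):ℝ) := by
    exact_mod_cast Nat.factorial_le (by omega : k ≤ 2*k)
  exact div_le_div_of_nonneg_left (by positivity) (by positivity) h3

lemma summable_cs (ℓ : ℕ) (s : ℝ) :
    Summable (fun k : ℕ => (ℓ:ℝ)^(2*k) / ((2*k).factorial : ℝ) * |s|^(2*k)) := by
  have := summable_aux ((ℓ:ℝ) * |s|)
  refine this.congr fun k => ?_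
  rw [mul_pow]
  ring

noncomputable def wgt (n : ℕ) (u : ℝ) : ℝ := (1 - u ^ 2) ^ (((n : ℝ) - 1) / 2)

lemma wgt_cont (n : ℕ) (hn : 1 ≤ n) : Continuous (wgt n) := by
  have he : (0:ℝ) ≤ ((n : ℝ) - 1) / 2 := by
    have : (1:ℝ) ≤ n := by exact_mod_cast hn
    linarith
  exact (Real.continuous_rpow_const he).comp (by continuity)

lemma wgt_mem (n : ℕ) (hn : 1 ≤ n) : ∀ u ∈ Set.Ioc (0:ℝ) 1, 0 ≤ wgt n u ∧ wgt n u ≤ 1 := by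
  intro u hu
  have he : (0:ℝ) ≤ ((n : ℝ) - 1) / 2 := by
    have : (1:ℝ) ≤ n := by exact_mod_cast hn
    linarith
  have h0 : (0:ℝ) ≤ 1 - u^2 := by nlinarith [hu.1, hu.2]
  have h1 : 1 - u^2 ≤ 1 := by nlinarith [hu.1]
  exact ⟨Real.rpow_nonneg h0 _, Real.rpow_le_one h0 h1 he⟩

noncomputable def Ik (n : ℕ) (k : ℕ) : ℝ := ∫ u in Set.Ioc (0:ℝ) 1, wgt n u * u^(2*k)

lemma Ik_abs (n : ℕ) (hn : 1 ≤ n) (k : ℕ) : |Ik n k| ≤ 1 := by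
  have hvol : (MeasureTheory.volume (Set.Ioc (0:ℝ) 1)) < ⊤ := by
    rw [Real.volume_Ioc]
    exact ENNReal.ofReal_lt_top
  have := MeasureTheory.norm_setIntegral_le_of_norm_le_const (μ := MeasureTheory.volume)
    (f := fun u => wgt n u * u^(2*k)) (C := 1) hvol ?_
  · rw [Real.norm_eq_abs] at this
    calc |Ik n k| ≤ 1 * (MeasureTheory.volume (Set.Ioc (0:ℝ) 1)).toReal := this
      _ = 1 := by rw [Real.volume_Ioc]; norm_num
  · intro u hu
    obtain ⟨hw0, hw1⟩ := wgt_mem n hn u hu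
    have hu1 : |u^(2*k)| ≤ 1 := by
      rw [abs_pow]
      refine pow_le_one₀ (abs_nonneg _) ?_
      rw [abs_le]; constructor <;> nlinarith [hu.1, hu.2]
    rw [Real.norm_eq_abs, abs_mul]
    calc |wgt n u| * |u^(2*k)| ≤ 1 * 1 := by
          refine mul_le_mul ?_ hu1 (abs_nonneg _) (by norm_num)
          rw [abs_of_nonneg hw0]; exact hw1
      _ = 1 := by norm_num

lemma key_integral (n ℓ : ℕ) (hn : 1 ≤ n) (s : ℝ) :
    ∫ u in (0:ℝ)..1, wgt n u * Real.sin (u*s/2)^(2*ℓ)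
      = ∑' k : ℕ, cSER ℓ k * s^(2*k) * Ik n k := by
  rw [intervalIntegral.integral_of_le (by norm_num : (0:ℝ) ≤ 1)]
  set μ := MeasureTheory.volume.restrict (Set.Ioc (0:ℝ) 1) with hμ
  set F : ℕ → ℝ → ℝ := fun k u => (cSER ℓ k * s^(2*k)) * (wgt n u * u^(2*k)) with hF
  have hFc : ∀ k, Continuous (F k) := fun k =>
    continuous_const.mul ((wgt_cont n hn).mul (continuous_pow _))
  have hInt : ∀ k, MeasureTheory.Integrable (F k) μ := fun k =>
    (hFc k).integrableOn_Ioc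
  have hbd : ∀ k u, u ∈ Set.Ioc (0:ℝ) 1 → ‖F k u‖ ≤ |cSER ℓ k| * |s|^(2*k) := by
    intro k u hu
    obtain ⟨hw0, hw1⟩ := wgt_mem n hn u hu
    rw [hF]
    simp only [Real.norm_eq_abs, abs_mul]
    have h1 : |wgt n u| * |u^(2*k)| ≤ 1 := by
      have hu1 : |u^(2*k)| ≤ 1 := by
        rw [abs_pow]
        refine pow_le_one₀ (abs_nonneg _) ?_
        rw [abs_le]; constructor <;> nlinarith [hu.1, hu.2]
      calc |wgt n u| * |u^(2*k)| ≤ 1 * 1 := by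
            refine mul_le_mul ?_ hu1 (abs_nonneg _) (by norm_num)
            rw [abs_of_nonneg hw0]; exact hw1
        _ = 1 := by norm_num
    calc |cSER ℓ k| * |s^(2*k)| * (|wgt n u| * |u^(2*k)|)
        ≤ |cSER ℓ k| * |s^(2*k)| * 1 := by
          refine mul_le_mul_of_nonneg_left h1 (by positivity)
      _ = |cSER ℓ k| * |s|^(2*k) := by rw [mul_one, abs_pow]
  have hnorm : ∀ k, (∫ u, ‖F k u‖ ∂μ) ≤ |cSER ℓ k| * |s|^(2*k) := by
    intro k
    have h2 : (∫ u, ‖F k u‖ ∂μ) ≤ ∫ _ in Set.Ioc (0:ℝ) 1, (|cSER ℓ k| * |s|^(2*k)) := by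
      rw [hμ]
      refine MeasureTheory.setIntegral_mono_on (hInt k).norm
        (MeasureTheory.integrableOn_const ?_) measurableSet_Ioc ?_
      · rw [Real.volume_Ioc]; exact ENNReal.ofReal_ne_top
      · exact hbd k
    calc (∫ u, ‖F k u‖ ∂μ) ≤ ∫ _ in Set.Ioc (0:ℝ) 1, (|cSER ℓ k| * |s|^(2*k)) := h2
      _ = (|cSER ℓ k| * |s|^(2*k)) := by
          rw [MeasureTheory.setIntegral_const, Real.volume_real_Ioc]
          norm_num
  have hmaj : Summable (fun k => |cSER ℓ k| * |s|^(2*k)) := by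
    refine Summable.of_nonneg_of_le (fun k => by positivity) (fun k => ?_) (summable_cs ℓ s)
    exact mul_le_mul_of_nonneg_right (cSER_bound ℓ k) (by positivity)
  have hSum : Summable fun k => ∫ u, ‖F k u‖ ∂μ := by
    refine Summable.of_nonneg_of_le (fun k => ?_) hnorm hmaj
    exact MeasureTheory.integral_nonneg fun u => norm_nonneg _
  have hswap := MeasureTheory.integral_tsum_of_summable_integral_norm hInt hSum
  have hpt : ∀ u : ℝ, (∑' k, F k u) = wgt n u * Real.sin (u*s/2)^(2*ℓ) := by
    intro u
    have h := (hasSum_sin_pow ℓ (u*s)).mul_left (wgt n u)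
    have heq : (fun k => wgt n u * (cSER ℓ k * (u*s)^(2*k))) = fun k => F k u := by
      funext k
      rw [hF]
      simp only [mul_pow]
      ring
    rw [heq] at h
    have : u * s / 2 = (u*s)/2 := by ring
    rw [this]
    exact h.tsum_eq
  have hleft : ∀ k, (∫ u, F k u ∂μ) = cSER ℓ k * s^(2*k) * Ik n k := by
    intro k
    rw [show (∫ u, F k u ∂μ) = ∫ u, (cSER ℓ k * s^(2*k)) * (wgt n u * u^(2*k)) ∂μ from rfl,
      MeasureTheory.integral_const_mul]
    rfl
  calc (∫ u in Set.Ioc (0:ℝ) 1, wgt n u * Real.sin (u*s/2)^(2*ℓ))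
      = ∫ u, (∑' k, F k u) ∂μ := by
        rw [hμ]
        refine MeasureTheory.integral_congr_ae (Filter.Eventually.of_forall fun u => ?_)
        simpa using (hpt u).symm
    _ = ∑' k, ∫ u, F k u ∂μ := hswap.symm
    _ = ∑' k, cSER ℓ k * s^(2*k) * Ik n k := by
        exact tsum_congr hleft

lemma key_all (n ℓ : ℕ) (hn : 1 ≤ n) : ∃ G0 : ℝ → ℝ, ContDiff ℝ ∞ G0 ∧
    ∀ s : ℝ, AFn n ℓ s = s^(2*ℓ) * G0 (s^2) := by
  classical
  set d : ℕ → ℝ := fun j => cSER ℓ (j+ℓ) * Ik n (j+ℓ) with hd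
  have hdb : ∀ j, |d j| ≤ (ℓ:ℝ)^(2*ℓ) * ((ℓ:ℝ)^2)^j / (j.factorial : ℝ) := by
    intro j
    have h1 : |d j| ≤ |cSER ℓ (j+ℓ)| := by
      rw [hd]
      simp only []
      rw [abs_mul]
      calc |cSER ℓ (j+ℓ)| * |Ik n (j+ℓ)| ≤ |cSER ℓ (j+ℓ)| * 1 :=
            mul_le_mul_of_nonneg_left (Ik_abs n hn _) (abs_nonneg _)
        _ = |cSER ℓ (j+ℓ)| := mul_one _
    have h2 := cSER_bound ℓ (j+ℓ)
    have h3 : (ℓ:ℝ)^(2*(j+ℓ)) = (ℓ:ℝ)^(2*ℓ) * ((ℓ:ℝ)^2)^j := by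
      rw [show 2*(j+ℓ) = 2*ℓ + 2*j by ring, pow_add, pow_mul, pow_mul]
    have h4 : ((j.factorial : ℕ):ℝ) ≤ (((2*(j+ℓ)).factorial : ℕ):ℝ) := by
      exact_mod_cast Nat.factorial_le (by omega)
    calc |d j| ≤ (ℓ:ℝ)^(2*(j+ℓ)) / ((2*(j+ℓ)).factorial : ℝ) := le_trans h1 h2
      _ ≤ (ℓ:ℝ)^(2*(j+ℓ)) / (j.factorial : ℝ) :=
          div_le_div_of_nonneg_left (by positivity) (by positivity) h4
      _ = (ℓ:ℝ)^(2*ℓ) * ((ℓ:ℝ)^2)^j / (j.factorial : ℝ) := by rw [h3]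
  set p : FormalMultilinearSeries ℝ ℝ ℝ :=
    fun j => d j • ContinuousMultilinearMap.mkPiAlgebraFin ℝ j ℝ with hp
  have hpnorm : ∀ j, ‖p j‖ ≤ |d j| := by
    intro j
    rw [hp]
    simp only []
    rw [norm_smul (d j) (ContinuousMultilinearMap.mkPiAlgebraFin ℝ j ℝ), Real.norm_eq_abs]
    have hM : ‖ContinuousMultilinearMap.mkPiAlgebraFin ℝ j ℝ‖ ≤ 1 := by
      cases j with
      | zero => rw [ContinuousMultilinearMap.norm_mkPiAlgebraFin_zero]; simp
      | succ j => exact ContinuousMultilinearMap.norm_mkPiAlgebraFin_succ_le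
    calc |d j| * ‖ContinuousMultilinearMap.mkPiAlgebraFin ℝ j ℝ‖ ≤ |d j| * 1 :=
          mul_le_mul_of_nonneg_left hM (abs_nonneg _)
      _ = |d j| := mul_one _
  have hrad : p.radius = ⊤ := by
    refine p.radius_eq_top_of_summable_norm fun r => ?_
    have hs : Summable (fun j : ℕ => (ℓ:ℝ)^(2*ℓ) * (((ℓ:ℝ)^2 * r)^j / (j.factorial : ℝ))) :=
      (Real.summable_pow_div_factorial ((ℓ:ℝ)^2 * r)).mul_left _
    refine Summable.of_nonneg_of_le (fun j => by positivity) (fun j => ?_) hs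
    calc ‖p j‖ * (r:ℝ)^j ≤ |d j| * (r:ℝ)^j :=
          mul_le_mul_of_nonneg_right (hpnorm j) (by positivity)
      _ ≤ ((ℓ:ℝ)^(2*ℓ) * ((ℓ:ℝ)^2)^j / (j.factorial : ℝ)) * (r:ℝ)^j :=
          mul_le_mul_of_nonneg_right (hdb j) (by positivity)
      _ = (ℓ:ℝ)^(2*ℓ) * (((ℓ:ℝ)^2 * r)^j / (j.factorial : ℝ)) := by
          rw [mul_pow]
          ring
  have hsum_at : ∀ y : ℝ, HasSum (fun j => d j * y^j) (p.sum y) := by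
    intro y
    have hmem : y ∈ EMetric.ball (0:ℝ) p.radius := by
      rw [hrad]; exact edist_lt_top y 0
    have h := p.hasSum hmem
    refine h.congr_fun fun j => ?_
    rw [hp]
    simp only [ContinuousMultilinearMap.smul_apply,
      ContinuousMultilinearMap.mkPiAlgebraFin_apply, smul_eq_mul]
    congr 1
    rw [List.ofFn_const, List.prod_replicate]
  have hsmooth : ContDiff ℝ ∞ p.sum := by
    have hball := p.hasFPowerSeriesOnBall (by rw [hrad]; exact ENNReal.zero_lt_top)
    refine contDiff_iff_contDiffAt.2 fun y => ?_
    exact (hball.analyticAt_of_mem (by rw [hrad]; exact edist_lt_top y 0)).contDiffAt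
  refine ⟨fun y => ((∫ u in (0:ℝ)..1, (1 - u ^ 2) ^ (((n : ℝ) - 1) / 2))⁻¹ *
      ((4 : ℝ) ^ ℓ / ((2 * ℓ).choose ℓ : ℝ))) * p.sum y,
    contDiff_const.mul hsmooth, fun s => ?_⟩
  have hAFn : AFn n ℓ s = (∫ u in (0:ℝ)..1, (1 - u ^ 2) ^ (((n : ℝ) - 1) / 2))⁻¹ *
      ((4 : ℝ) ^ ℓ / ((2 * ℓ).choose ℓ : ℝ)) *
      ∑' k : ℕ, cSER ℓ k * s^(2*k) * Ik n k := by
    rw [AFn, ← key_integral n ℓ hn s]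
    rfl
  set T : ℕ → ℝ := fun k => cSER ℓ k * s^(2*k) * Ik n k with hT
  have hTsum : Summable T := by
    have hmaj : Summable (fun k : ℕ => |cSER ℓ k| * |s|^(2*k)) :=
      Summable.of_nonneg_of_le (fun k => by positivity)
        (fun k => mul_le_mul_of_nonneg_right (cSER_bound ℓ k) (by positivity))
        (summable_cs ℓ s)
    refine Summable.of_norm_bounded hmaj (fun k => ?_)
    · rw [hT]
      simp only [Real.norm_eq_abs, abs_mul]
      calc |cSER ℓ k| * |s^(2*k)| * |Ik n k| ≤ |cSER ℓ k| * |s^(2*k)| * 1 :=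
            mul_le_mul_of_nonneg_left (Ik_abs n hn k) (by positivity)
        _ = |cSER ℓ k| * |s|^(2*k) := by rw [mul_one, abs_pow]
  have hzero : (∑ i ∈ Finset.range ℓ, T i) = 0 :=
    Finset.sum_eq_zero fun i hi => by
      rw [hT]
      simp only []
      rw [cSER_zero ℓ i (Finset.mem_range.1 hi)]
      ring
  have hshift := Summable.sum_add_tsum_nat_add (f := T) ℓ hTsum
  have hTtail : (∑' j : ℕ, T (j + ℓ)) = s^(2*ℓ) * p.sum (s^2) := by
    have h1 : ∀ j : ℕ, T (j + ℓ) = s^(2*ℓ) * (d j * (s^2)^j) := by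
      intro j
      rw [hT, hd]
      simp only []
      rw [show 2*(j+ℓ) = 2*ℓ + 2*j by ring, pow_add, pow_mul]
      ring
    rw [tsum_congr h1, tsum_mul_left, (hsum_at (s^2)).tsum_eq]
  rw [hAFn, ← hshift, hzero, zero_add, hTtail]
  ring

lemma step_rep {n : ℕ} (i : Fin n) (G : ℝ → EuclideanSpace ℝ (Fin n) → ℂ)
    (hG : ContDiff ℝ ∞ (Function.uncurry G)) :
    ∃ G' : ℝ → EuclideanSpace ℝ (Fin n) → ℂ, ContDiff ℝ ∞ (Function.uncurry G') ∧
      ∀ (c : ℂ) (τ : ℝ), pderivI i (fun ξ => c * G τ ξ) = fun ξ => c * G' τ ξ := by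
  refine ⟨fun τ ξ => fderiv ℝ (Function.uncurry G) (τ, ξ) (0, EuclideanSpace.single i 1),
    ?_, ?_⟩
  · have h1 : ContDiff ℝ ∞ (fderiv ℝ (Function.uncurry G)) := hG.fderiv_right (by simp)
    have h2 : ContDiff ℝ ∞ (fun p : ℝ × EuclideanSpace ℝ (Fin n) =>
        fderiv ℝ (Function.uncurry G) p ((0:ℝ), EuclideanSpace.single i 1)) :=
      h1.clm_apply contDiff_const
    exact h2
  · intro c τ
    funext ξ
    have hdiff : DifferentiableAt ℝ (Function.uncurry G) (τ, ξ) :=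
      (hG.differentiable (by simp)).differentiableAt
    have hJ : HasFDerivAt (fun ξ' : EuclideanSpace ℝ (Fin n) => (τ, ξ'))
        (((0 : EuclideanSpace ℝ (Fin n) →L[ℝ] ℝ)).prod (ContinuousLinearMap.id ℝ _)) ξ :=
      (hasFDerivAt_const τ ξ).prodMk (hasFDerivAt_id ξ)
    have h1 : HasFDerivAt (fun ξ' => G τ ξ')
        ((fderiv ℝ (Function.uncurry G) (τ, ξ)).comp
          (((0 : EuclideanSpace ℝ (Fin n) →L[ℝ] ℝ)).prod (ContinuousLinearMap.id ℝ _))) ξ :=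
      (hdiff.hasFDerivAt.comp ξ hJ : _)
    have h2 := h1.const_mul c
    show fderiv ℝ (fun ξ' => c * G τ ξ') ξ (EuclideanSpace.single i 1) = _
    rw [h2.fderiv]
    simp only [ContinuousLinearMap.smul_apply, ContinuousLinearMap.coe_comp',
      Function.comp_apply, ContinuousLinearMap.prod_apply, ContinuousLinearMap.zero_apply,
      ContinuousLinearMap.coe_id', id_eq, smul_eq_mul]

lemma iter_rep {n : ℕ} (i : Fin n) (r : ℕ) (G : ℝ → EuclideanSpace ℝ (Fin n) → ℂ)
    (hG : ContDiff ℝ ∞ (Function.uncurry G)) :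
    ∃ G' : ℝ → EuclideanSpace ℝ (Fin n) → ℂ, ContDiff ℝ ∞ (Function.uncurry G') ∧
      ∀ (c : ℂ) (τ : ℝ), (pderivI i)^[r] (fun ξ => c * G τ ξ) = fun ξ => c * G' τ ξ := by
  induction r with
  | zero => exact ⟨G, hG, fun c τ => rfl⟩
  | succ r ih =>
    obtain ⟨G1, hG1, hrep1⟩ := ih
    obtain ⟨G2, hG2, hrep2⟩ := step_rep i G1 hG1
    refine ⟨G2, hG2, fun c τ => ?_⟩
    rw [Function.iterate_succ_apply', hrep1 c τ, hrep2 c τ]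

lemma list_rep {n : ℕ} (β : Fin n → ℕ) (L : List (Fin n))
    (G : ℝ → EuclideanSpace ℝ (Fin n) → ℂ) (hG : ContDiff ℝ ∞ (Function.uncurry G)) :
    ∃ G' : ℝ → EuclideanSpace ℝ (Fin n) → ℂ, ContDiff ℝ ∞ (Function.uncurry G') ∧
      ∀ (c : ℂ) (τ : ℝ),
        L.foldr (fun i g => (pderivI i)^[β i] g) (fun ξ => c * G τ ξ) = fun ξ => c * G' τ ξ := by
  induction L with
  | nil => exact ⟨G, hG, fun c τ => rfl⟩
  | cons i L ih =>
    obtain ⟨G1, hG1, hrep1⟩ := ih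
    obtain ⟨G2, hG2, hrep2⟩ := iter_rep i (β i) G1 hG1
    refine ⟨G2, hG2, fun c τ => ?_⟩
    rw [List.foldr_cons, hrep1 c τ, hrep2 c τ]

lemma pderivI_vanish {n : ℕ} (i : Fin n) {V : Set (EuclideanSpace ℝ (Fin n))} (hV : IsOpen V)
    {f : EuclideanSpace ℝ (Fin n) → ℂ} (hf : ∀ x ∈ V, f x = 0) :
    ∀ x ∈ V, pderivI i f x = 0 := by
  intro x hx
  have hev : f =ᶠ[nhds x] (fun _ => 0) :=
    Filter.eventuallyEq_of_mem (hV.mem_nhds hx) hf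
  show fderiv ℝ f x (EuclideanSpace.single i 1) = 0
  rw [hev.fderiv_eq, fderiv_const_apply]
  rfl

lemma iter_vanish {n : ℕ} (i : Fin n) (r : ℕ) {V : Set (EuclideanSpace ℝ (Fin n))}
    (hV : IsOpen V) {f : EuclideanSpace ℝ (Fin n) → ℂ} (hf : ∀ x ∈ V, f x = 0) :
    ∀ x ∈ V, (pderivI i)^[r] f x = 0 := by
  induction r generalizing f with
  | zero => exact hf
  | succ r ih =>
    intro x hx
    rw [Function.iterate_succ_apply]
    exact ih (pderivI_vanish i hV hf) x hx

lemma list_vanish {n : ℕ} (β : Fin n → ℕ) (L : List (Fin n))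
    {V : Set (EuclideanSpace ℝ (Fin n))} (hV : IsOpen V)
    {f : EuclideanSpace ℝ (Fin n) → ℂ} (hf : ∀ x ∈ V, f x = 0) :
    ∀ x ∈ V, L.foldr (fun i g => (pderivI i)^[β i] g) f x = 0 := by
  induction L with
  | nil => exact hf
  | cons i L ih =>
    rw [List.foldr_cons]
    exact iter_vanish i (β i) hV ih

lemma FT_eq {n : ℕ} (φ : 𝓢(EuclideanSpace ℝ (Fin n), ℂ)) :
    FT ⇑φ = fun ξ => (SchwartzMap.fourierTransformCLM ℂ φ) ((2*Real.pi)⁻¹ • ξ) := by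
  funext ξ
  rw [SchwartzMap.fourierTransformCLM_apply, SchwartzMap.fourier_coe, Real.fourier_eq]
  unfold FT
  refine integral_congr_ae (Filter.Eventually.of_forall fun x => ?_)
  simp only [Circle.smul_def, Real.fourierChar_apply, smul_eq_mul]
  congr 1
  have hinner : (inner ℝ x ((2*Real.pi)⁻¹ • ξ) : ℝ) = (2*Real.pi)⁻¹ * (inner ℝ x ξ : ℝ) :=
    real_inner_smul_right x ξ _
  rw [hinner]
  have hπ : (2*Real.pi) * ((2*Real.pi)⁻¹ * (inner ℝ x ξ : ℝ)) = (inner ℝ x ξ : ℝ) := by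
    field_simp
  congr 1
  push_cast
  have hpi : ((Real.pi:ℂ)) ≠ 0 := by exact_mod_cast Real.pi_ne_zero
  field_simp
lemma FT_smooth {n : ℕ} (φ : 𝓢(EuclideanSpace ℝ (Fin n), ℂ)) :
    ContDiff ℝ ∞ (FT ⇑φ) := by
  rw [FT_eq φ]
  exact ((SchwartzMap.fourierTransformCLM ℂ φ).smooth ⊤).comp
    (contDiff_const_smul _)

end Aux

/-- Let `ℓ ≥ 1` and let `φ` be Schwartz satisfying (1.10).  For integers `j < k` let
`m̃_{k,j}(ξ) := φ̂(ξ) A_ℓ(2^{j-k}|ξ|)`.  Then `m̃_{k,j}` is supported in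
`{1/2 ≤ |ξ| ≤ 2}` and, for every multi-index `β`, there is a constant `C = C(β,φ,n,ℓ)`
(independent of `j, k`) with `|∂^β m̃_{k,j}(ξ)| ≤ C 2^{2ℓ(j-k)}` for all `ξ`. -/
theorem stmt12 (n : ℕ) (hn : 1 ≤ n) (ℓ : ℕ) (hℓ : 0 < ℓ)
    (φ : 𝓢(EuclideanSpace ℝ (Fin n), ℂ)) (hφ : Cond110 φ) :
    (∀ k j : ℤ, j < k →
      Function.support (mTilde ℓ φ k j) ⊆
        {ξ : EuclideanSpace ℝ (Fin n) | 1/2 ≤ ‖ξ‖ ∧ ‖ξ‖ ≤ 2}) ∧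
    ∀ β : Fin n → ℕ, ∃ C : ℝ, 0 < C ∧ ∀ k j : ℤ, j < k →
      ∀ ξ : EuclideanSpace ℝ (Fin n),
        ‖pderivMulti β (mTilde ℓ φ k j) ξ‖ ≤ C * (2 : ℝ) ^ (2 * (ℓ : ℤ) * (j - k)) := by

  have hsupp : ∀ k j : ℤ, j < k →
      Function.support (mTilde ℓ φ k j) ⊆
        {ξ : EuclideanSpace ℝ (Fin n) | 1/2 ≤ ‖ξ‖ ∧ ‖ξ‖ ≤ 2} := by
    intro k j hjk ξ hξ
    apply hφ.1
    intro h0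
    apply hξ
    show mTilde ℓ φ k j ξ = 0
    rw [mTilde, h0, zero_mul]
  refine ⟨hsupp, ?_⟩
  intro β
  obtain ⟨G0, hG0, hKey⟩ := key_all n ℓ hn
  set F : ℝ → EuclideanSpace ℝ (Fin n) → ℂ := fun τ ξ =>
    FT ⇑φ ξ * ((((‖ξ‖^2)^ℓ * G0 (τ * ‖ξ‖^2)) : ℝ) : ℂ) with hFdef
  have hFsmooth : ContDiff ℝ ∞ (Function.uncurry F) := by
    have h1 : ContDiff ℝ ∞ (fun p : ℝ × EuclideanSpace ℝ (Fin n) => FT ⇑φ p.2) :=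
      (FT_smooth φ).comp contDiff_snd
    have hnsq : ContDiff ℝ ∞ (fun p : ℝ × EuclideanSpace ℝ (Fin n) => ‖p.2‖^2) :=
      (contDiff_norm_sq ℝ).comp contDiff_snd
    have h2 : ContDiff ℝ ∞ (fun p : ℝ × EuclideanSpace ℝ (Fin n) =>
        (‖p.2‖^2)^ℓ * G0 (p.1 * ‖p.2‖^2)) :=
      (hnsq.pow ℓ).mul (hG0.comp (contDiff_fst.mul hnsq))
    exact h1.mul (Complex.ofRealCLM.contDiff.comp h2)
  obtain ⟨G, hGs, hGrep⟩ := list_rep β (List.finRange n) F hFsmooth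
  obtain ⟨C₀, hC₀⟩ := ((isCompact_Icc (a := (0:ℝ)) (b := 1)).prod
    (isCompact_closedBall (0 : EuclideanSpace ℝ (Fin n)) 2)).exists_bound_of_continuousOn
    hGs.continuous.continuousOn
  refine ⟨max C₀ 0 + 1, by positivity, ?_⟩
  intro k j hjk ξ
  set t : ℝ := (2:ℝ)^(j-k) with htdef
  have ht0 : 0 < t := zpow_pos (by norm_num) _
  have ht1 : t ≤ 1 := zpow_le_one_of_nonpos₀ (by norm_num) (by omega)
  have hRHSpos : (0:ℝ) < (2:ℝ)^(2*(ℓ:ℤ)*(j-k)) := zpow_pos (by norm_num) _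
  have hRHS : (2:ℝ)^(2*(ℓ:ℤ)*(j-k)) = t^(2*ℓ) := by
    rw [htdef, ← zpow_natCast ((2:ℝ)^(j-k)) (2*ℓ), ← zpow_mul]
    congr 1
    push_cast
    ring
  by_cases hξ2 : ‖ξ‖ ≤ 2
  · -- the compactness bound
    have hmT : mTilde ℓ φ k j = fun ξ' => ((t^(2*ℓ) : ℝ) : ℂ) * F (t^2) ξ' := by
      funext ξ'
      rw [mTilde, ← htdef, hKey (t * ‖ξ'‖), hFdef]
      have h5 : (t*‖ξ'‖)^(2*ℓ) = t^(2*ℓ) * (‖ξ'‖^2)^ℓ := by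
        rw [mul_pow]
        congr 1
        rw [← pow_mul]
      have h6 : (t*‖ξ'‖)^2 = t^2*‖ξ'‖^2 := mul_pow t (‖ξ'‖) 2
      rw [h5, h6]
      push_cast
      ring
    have hrepeq : pderivMulti β (mTilde ℓ φ k j)
        = fun ξ' => ((t^(2*ℓ) : ℝ) : ℂ) * G (t^2) ξ' := by
      rw [pderivMulti, hmT]
      exact hGrep ((t^(2*ℓ) : ℝ) : ℂ) (t^2)
    rw [hrepeq]
    have hmem : ((t^2 : ℝ), ξ) ∈ Set.Icc (0:ℝ) 1 ×ˢ closedBall (0 : EuclideanSpace ℝ (Fin n)) 2 := by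
      constructor
      · exact Set.mem_Icc.2 ⟨sq_nonneg t, pow_le_one₀ (le_of_lt ht0) ht1⟩
      · exact mem_closedBall_zero_iff.2 hξ2
    have hb := hC₀ _ hmem
    have hGnorm : ‖Function.uncurry G ((t^2 : ℝ), ξ)‖ = ‖G (t^2) ξ‖ := rfl
    calc ‖((t^(2*ℓ) : ℝ) : ℂ) * G (t^2) ξ‖ = t^(2*ℓ) * ‖G (t^2) ξ‖ := by
          rw [norm_mul, Complex.norm_real, Real.norm_eq_abs, abs_of_nonneg (by positivity)]
      _ ≤ t^(2*ℓ) * (max C₀ 0 + 1) := by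
          refine mul_le_mul_of_nonneg_left ?_ (by positivity)
          calc ‖G (t^2) ξ‖ ≤ C₀ := by rw [← hGnorm]; exact hb
            _ ≤ max C₀ 0 + 1 := by
                have := le_max_left C₀ (0:ℝ)
                linarith
      _ = (max C₀ 0 + 1) * (2:ℝ)^(2*(ℓ:ℤ)*(j-k)) := by rw [hRHS]; ring
  · -- off the annulus everything vanishes
    have hVclosed : IsClosed {x : EuclideanSpace ℝ (Fin n) | 1/2 ≤ ‖x‖ ∧ ‖x‖ ≤ 2} := by
      have : {x : EuclideanSpace ℝ (Fin n) | 1/2 ≤ ‖x‖ ∧ ‖x‖ ≤ 2}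
          = {x | 1/2 ≤ ‖x‖} ∩ {x | ‖x‖ ≤ 2} := rfl
      rw [this]
      exact (isClosed_le continuous_const continuous_norm).inter
        (isClosed_le continuous_norm continuous_const)
    have hzero : ∀ x ∈ {x : EuclideanSpace ℝ (Fin n) | 1/2 ≤ ‖x‖ ∧ ‖x‖ ≤ 2}ᶜ,
        mTilde ℓ φ k j x = 0 := by
      intro x hx
      by_contra hne
      exact hx (hsupp k j hjk hne)
    have hvan := list_vanish β (List.finRange n) hVclosed.isOpen_compl hzero ξ
      (by intro hmem; exact hξ2 hmem.2)
    have : pderivMulti β (mTilde ℓ φ k j) ξ = 0 := hvan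
    rw [this, norm_zero]
    positivity
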